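/- Let G ⊆ ℕ^n and [G] the smallest submonoid of ℕ^n containing G closed under infima. Then every element of [G] is the infimum of at most n elements of ⟨G⟩; i.e. [G] = { g₁ ∧ ⋯ ∧ g_n : g_i ∈ ⟨G⟩ }. -/

import Mathlib

/-- `[G]`: the smallest submonoid of `ℕ^n` containing `G` closed under componentwise infima. -/
def goodClosure {n : ℕ} (G : Set (Fin n → ℕ)) : Set (Fin n → ℕ) :=
  ⋂₀ {M | G ⊆ M ∧ 0 ∈ M ∧ (∀ a ∈ M, ∀ b ∈ M, a + b ∈ M) ∧ ∀ a ∈ M, ∀ b ∈ M, a ⊓ b ∈ M}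

/-- Any inf of a finite nonempty family of elements of `⟨G⟩` can be written as an inf
of `n` elements of `⟨G⟩`. -/
lemma reduce_inf {n : ℕ} (hn : 0 < n) (G : Set (Fin n → ℕ)) {J : Type} (s : Finset J)
    (hs : s.Nonempty) (f : J → Fin n → ℕ) (hf : ∀ j ∈ s, f j ∈ AddSubmonoid.closure G) :
    ∃ g : Fin n → Fin n → ℕ,
      (∀ i, g i ∈ AddSubmonoid.closure G) ∧
      s.inf' hs f = Finset.univ.inf'
        (Finset.univ_nonempty_iff.mpr (Fin.pos_iff_nonempty.mp hn)) g := by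
  have key : ∀ i : Fin n, ∃ j ∈ s, s.inf' hs (fun j => f j i) = f j i := fun i =>
    Finset.exists_mem_eq_inf' hs (fun j => f j i)
  choose jj hjj hval using key
  refine ⟨fun i => f (jj i), fun i => hf _ (hjj i), ?_⟩
  funext k
  rw [Finset.inf'_apply, Finset.inf'_apply]
  apply le_antisymm
  · exact Finset.le_inf' _ _ fun i _ => Finset.inf'_le _ (hjj i)
  · calc Finset.univ.inf' _ (fun i => f (jj i) k) ≤ f (jj k) k :=
          Finset.inf'_le _ (Finset.mem_univ k)
      _ = s.inf' hs (fun j => f j k) := (hval k).symm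

theorem goodClosure_eq_infs_of_n_sums {n : ℕ} (hn : 0 < n) (G : Set (Fin n → ℕ)) :
    goodClosure G =
      { x | ∃ g : Fin n → Fin n → ℕ,
          (∀ i, g i ∈ AddSubmonoid.closure G) ∧
          x = Finset.univ.inf'
            (Finset.univ_nonempty_iff.mpr (Fin.pos_iff_nonempty.mp hn)) g } := by
  set ne : (Finset.univ : Finset (Fin n)).Nonempty :=
    Finset.univ_nonempty_iff.mpr (Fin.pos_iff_nonempty.mp hn) with hne
  apply le_antisymm
  · -- goodClosure ⊆ RHS: show RHS belongs to the intersected family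
    intro x hx
    apply hx
    refine ⟨?_, ?_, ?_, ?_⟩
    · -- G ⊆ RHS
      intro a ha
      refine ⟨fun _ => a, fun _ => AddSubmonoid.subset_closure ha, ?_⟩
      simp
    · -- 0 ∈ RHS
      refine ⟨fun _ => 0, fun _ => zero_mem _, ?_⟩
      simp
    · -- closed under addition
      rintro a ⟨g, hg, rfl⟩ b ⟨h, hh, rfl⟩
      have : (Finset.univ.inf' ne g) + (Finset.univ.inf' ne h) =
          (Finset.univ ×ˢ Finset.univ : Finset (Fin n × Fin n)).inf'
            (ne.product ne) (fun p => g p.1 + h p.2) := by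
        funext k
        simp only [Pi.add_apply, Finset.inf'_apply]
        apply le_antisymm
        · apply Finset.le_inf'
          rintro ⟨i, j⟩ -
          exact add_le_add (Finset.inf'_le _ (Finset.mem_univ i))
            (Finset.inf'_le _ (Finset.mem_univ j))
        · obtain ⟨i, -, hi⟩ := Finset.exists_mem_eq_inf' ne (fun i => g i k)
          obtain ⟨j, -, hj⟩ := Finset.exists_mem_eq_inf' ne (fun j => h j k)
          rw [hi, hj]
          exact Finset.inf'_le _ (show (i, j) ∈ _ by simp)
      rw [this]
      obtain ⟨g', hg', hval⟩ := reduce_inf hn G _ (ne.product ne) (fun p => g p.1 + h p.2)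
        (fun p _ => add_mem (hg p.1) (hh p.2))
      exact ⟨g', hg', hval⟩
    · -- closed under inf
      rintro a ⟨g, hg, rfl⟩ b ⟨h, hh, rfl⟩
      have hne2 : (Finset.univ : Finset (Fin n × Bool)).Nonempty :=
        Finset.univ_nonempty_iff.mpr (by
          exact ⟨(⟨0, hn⟩, true)⟩)
      have : (Finset.univ.inf' ne g) ⊓ (Finset.univ.inf' ne h) =
          Finset.univ.inf' hne2 (fun p : Fin n × Bool => if p.2 then g p.1 else h p.1) := by
        funext k
        simp only [Pi.inf_apply, Finset.inf'_apply]
        apply le_antisymm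
        · apply Finset.le_inf'
          rintro ⟨i, b⟩ -
          cases b with
          | true => exact inf_le_of_left_le (Finset.inf'_le _ (Finset.mem_univ i))
          | false => exact inf_le_of_right_le (Finset.inf'_le _ (Finset.mem_univ i))
        · apply le_inf
          · obtain ⟨i, -, hi⟩ := Finset.exists_mem_eq_inf' ne (fun i => g i k)
            rw [hi]
            exact Finset.inf'_le_of_le _ (show (i, true) ∈ _ by simp) le_rfl
          · obtain ⟨i, -, hi⟩ := Finset.exists_mem_eq_inf' ne (fun i => h i k)
            rw [hi]
            exact Finset.inf'_le_of_le _ (show (i, false) ∈ _ by simp) le_rfl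
      rw [this]
      obtain ⟨g', hg', hval⟩ := reduce_inf hn G _ hne2 (fun p : Fin n × Bool => if p.2 then g p.1 else h p.1)
        (fun p _ => by by_cases hb : p.2 <;> simp only [hb] <;> simp [hg p.1, hh p.1])
      exact ⟨g', hg', hval⟩
  · -- RHS ⊆ goodClosure
    rintro x ⟨g, hg, rfl⟩ M ⟨hGM, h0M, haddM, hinfM⟩
    have hclos : ∀ y ∈ AddSubmonoid.closure G, y ∈ M := by
      intro y hy
      induction hy using AddSubmonoid.closure_induction with
      | mem z hz => exact hGM hz
      | zero => exact h0M
      | add a b _ _ ha hb => exact haddM a ha b hb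
    exact Finset.inf'_mem M hinfM _ ne g (fun i _ => hclos _ (hg i))
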